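/- Let k be a field of characteristic p > 0 of finite p-rank r, with p-basis b_1,…,b_r, and let k((t)) be the field of formal Laurent series. Then the canonical map k/(℘(k) + k_{>0}) → k((t))/(℘(k((t))) + k((t))_{>0}) induced by the inclusion k ↪ k((t)) is bijective, where k((t))_{>0} is taken with respect to the p-basis b_1,…,b_r,t of k((t)). -/

import Mathlib

/-- The subring of `p`-th powers of `A` (in characteristic `p` this is exactly the image of
the Frobenius). -/
def pthPowers (A : Type*) [CommRing A] (p : ℕ) : Subring A := Subring.closure (Set.range (· ^ p))

/-- `b : I → A` is a `p`-basis of `A`: the monomials `∏ i, b i ^ ϑ i` for finitely supported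
`ϑ : I →₀ ℕ` with values `< p` form a basis of `A` as a module over the subring `A^p`. -/
def IsPBasis (p : ℕ) {A : Type*} [CommRing A] {I : Type*} (b : I → A) : Prop :=
  LinearIndependent (pthPowers A p)
    (fun ϑ : {ϑ : I →₀ ℕ // ∀ i, ϑ i < p} => ϑ.1.prod fun i e => b i ^ e) ∧
  ⊤ ≤ Submodule.span (pthPowers A p)
    (Set.range fun ϑ : {ϑ : I →₀ ℕ // ∀ i, ϑ i < p} => ϑ.1.prod fun i e => b i ^ e)

/-- The pure wedge `dc₁ ∧ ⋯ ∧ dc_i` of exact absolute differential forms, as an element of the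
`i`-th exterior power of `Ω¹_{L/ℤ}`. -/
noncomputable def pureD (L : Type*) [Field L] (i : ℕ) (c : Fin i → L) : ⋀[L]^i (Ω[L⁄ℤ]) :=
  ⟨ExteriorAlgebra.ιMulti L i fun j => KaehlerDifferential.D ℤ L (c j),
   ExteriorAlgebra.ιMulti_range L i (Set.mem_range_self _)⟩

/-- `x·dlog y₁ ∧ ⋯ ∧ dlog y_i = (x / ∏ y_j) • (dy₁ ∧ ⋯ ∧ dy_i)` in `Ω^i_L = ⋀^i Ω¹_{L/ℤ}`. -/
noncomputable def dlogWedge (L : Type*) [Field L] (i : ℕ) (x : L) (y : Fin i → L) :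
    ⋀[L]^i (Ω[L⁄ℤ]) := (x / ∏ j, y j) • pureD L i y

/-- The image `dΩ^{i-1}_L ⊆ Ω^i_L` of the exterior derivative: the additive subgroup generated
by pure wedges of exact forms (for `i = 0` it is `0`). -/
noncomputable def exactWedges (L : Type*) [Field L] (i : ℕ) : AddSubgroup (⋀[L]^i (Ω[L⁄ℤ])) :=
  if i = 0 then ⊥ else AddSubgroup.closure (Set.range (pureD L i))

/-- The image of `℘ = 1 - C⁻¹ : Ω^i_L → Ω^i_L/dΩ^{i-1}_L`, described via the characterizing
formula `℘(x·dlog y₁∧⋯∧dlog y_i) = (x - x^p)·dlog y₁∧⋯∧dlog y_i mod dΩ^{i-1}`. -/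
noncomputable def wpImage (L : Type*) [Field L] (p i : ℕ) :
    AddSubgroup ((⋀[L]^i (Ω[L⁄ℤ])) ⧸ exactWedges L i) :=
  AddSubgroup.closure {ω | ∃ (x : L) (y : Fin i → Lˣ),
    ω = QuotientAddGroup.mk (dlogWedge L i (x - x ^ p) fun j => (y j : L))}

/-- `H_p^{i+1}(L)`: the cokernel of `℘ = 1 - C⁻¹ : Ω^i_L → Ω^i_L/dΩ^{i-1}_L`. -/
noncomputable abbrev Hgroup (L : Type*) [Field L] (p i : ℕ) :=
  ((⋀[L]^i (Ω[L⁄ℤ])) ⧸ exactWedges L i) ⧸ wpImage L p i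

/-- The class of `x·dlog y₁∧⋯∧dlog y_i` in `H_p^{i+1}(L)`. -/
noncomputable def Hclass (L : Type*) [Field L] (p i : ℕ) (x : L) (y : Fin i → L) :
    Hgroup L p i := QuotientAddGroup.mk (QuotientAddGroup.mk (dlogWedge L i x y))

/-- The additive subgroup `℘(L) = {x - x^p}` of `L`. -/
def wpRange (L : Type*) [Field L] (p : ℕ) : AddSubgroup L :=
  AddSubgroup.closure {y | ∃ x : L, y = x - x ^ p}

/-- The additive subgroup `L_{>0} = ⊕_{ϑ ≠ 0} L^p b^ϑ` attached to a `p`-basis `b`. -/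
def gtZero (L : Type*) [Field L] (p : ℕ) {n : ℕ} (b : Fin n → L) : AddSubgroup L :=
  AddSubgroup.closure {y | ∃ (x : L) (ϑ : Fin n → ℕ),
    (∀ i, ϑ i < p) ∧ ϑ ≠ 0 ∧ y = x ^ p * ∏ i, b i ^ ϑ i}

namespace StatementSeven

variable {k : Type*} [Field k] {p r : ℕ}

/-! ### Generic auxiliary lemmas -/

theorem mem_pthPowers_iff (hp : p.Prime) [CharP k p] {x : k} (hx : x ∈ pthPowers k p) :
    ∃ y : k, y ^ p = x := by
  haveI : Fact p.Prime := ⟨hp⟩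
  let S : Subring k :=
  { carrier := Set.range (· ^ p)
    one_mem' := ⟨1, one_pow p⟩
    mul_mem' := by rintro a b ⟨a', rfl⟩ ⟨b', rfl⟩; exact ⟨a' * b', by simp [mul_pow]⟩
    zero_mem' := ⟨0, zero_pow hp.ne_zero⟩
    add_mem' := by rintro a b ⟨a', rfl⟩ ⟨b', rfl⟩; exact ⟨a' + b', by simp [add_pow_char]⟩
    neg_mem' := by
      rintro a ⟨a', rfl⟩
      refine ⟨-a', ?_⟩
      show (-a') ^ p = -(a' ^ p)
      have h1 : (-1 : k) ^ p = -1 := by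
        rcases hp.eq_two_or_odd' with rfl | ho
        · rw [CharTwo.neg_eq]; simp
        · exact ho.neg_one_pow
      rw [neg_pow, h1, neg_one_mul] }
  have : pthPowers k p ≤ S := Subring.closure_le.mpr fun y hy => hy
  obtain ⟨y, hy⟩ := this hx
  exact ⟨y, hy⟩

def coeffHom (g : ℤ) : LaurentSeries k →+ k where
  toFun f := f.coeff g
  map_zero' := rfl
  map_add' _ _ := HahnSeries.coeff_add

theorem laurent_single_pow (n : ℤ) (a : k) (m : ℕ) :
    (HahnSeries.single n a : LaurentSeries k) ^ m = HahnSeries.single ((m : ℤ) * n) (a ^ m) := by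
  rw [HahnSeries.single_pow, nsmul_eq_mul]

theorem algebraMap_eq_C (a : k) : algebraMap k (LaurentSeries k) a = HahnSeries.C a := by
  rw [HahnSeries.algebraMap_apply', PowerSeries.algebraMap_apply, Algebra.algebraMap_self_apply,
    HahnSeries.ofPowerSeries_C]

theorem pow_coeff_eq_zero_of_pos_support {f : LaurentSeries k}
    (hf : ∀ g : ℤ, g ≤ 0 → f.coeff g = 0) :
    ∀ n : ℕ, n ≠ 0 → ∀ g : ℤ, g ≤ 0 → (f ^ n).coeff g = 0 := by
  intro n
  induction n with
  | zero => exact fun h => absurd rfl h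
  | succ m ih =>
    intro _ g hg
    rcases Nat.eq_zero_or_pos m with rfl | hm
    · simpa using hf g hg
    by_contra hne
    have hmem : g ∈ (f ^ m * f).support := by
      rw [pow_succ] at hne; exact hne
    obtain ⟨a, ha, b, hb, rfl⟩ := HahnSeries.support_mul_subset hmem
    have ha' : 0 < a := by
      by_contra h
      exact ha (ih hm.ne' a (le_of_not_gt h))
    have hb' : 0 < b := by
      by_contra h
      exact hb (hf b (le_of_not_gt h))
    exact absurd hg (not_le.mpr (add_pos ha' hb'))

theorem laurent_trunc (f : LaurentSeries k) :
    ∃ (s : Finset ℤ) (h : LaurentSeries k), (∀ m ∈ s, m ≤ 0) ∧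
      (∀ g : ℤ, g ≤ 0 → h.coeff g = 0) ∧
      f = (∑ m ∈ s, HahnSeries.single m (f.coeff m)) + h := by
  classical
  rcases eq_or_ne f 0 with rfl | hf
  · exact ⟨∅, 0, by simp, by simp, by simp⟩
  have hfin : (f.support ∩ Set.Iic 0).Finite := by
    apply (Set.finite_Icc f.order 0).subset
    rintro g ⟨hg1, hg2⟩
    exact ⟨HahnSeries.order_le_of_coeff_ne_zero hg1, hg2⟩
  refine ⟨hfin.toFinset, f - ∑ m ∈ hfin.toFinset, HahnSeries.single m (f.coeff m), ?_, ?_, by ring⟩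
  · intro m hm
    exact (hfin.mem_toFinset.mp hm).2
  · intro g hg
    rw [HahnSeries.coeff_sub]
    have hcoe : (∑ m ∈ hfin.toFinset, HahnSeries.single m (f.coeff m)).coeff g
        = ∑ m ∈ hfin.toFinset, (HahnSeries.single m (f.coeff m)).coeff g :=
      map_sum (coeffHom g) _ _
    rw [hcoe]
    by_cases hg' : g ∈ f.support
    · rw [Finset.sum_eq_single g (fun m _ hne => HahnSeries.coeff_single_of_ne hne.symm)
        (fun hnot => absurd (hfin.mem_toFinset.mpr ⟨hg', hg⟩) hnot)]
      simp
    · have h0 : f.coeff g = 0 := by simpa [HahnSeries.mem_support] using hg'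
      rw [h0]
      have : ∀ m ∈ hfin.toFinset, (HahnSeries.single m (f.coeff m)).coeff g = 0 := by
        intro m hm
        rcases eq_or_ne g m with rfl | hne
        · simp [h0]
        · exact HahnSeries.coeff_single_of_ne hne
      rw [Finset.sum_eq_zero this, sub_zero]

theorem coeff_pow_p (hp : p.Prime) [CharP k p] (f : LaurentSeries k) (g : ℤ) (hg : g ≤ 0) :
    (f ^ p).coeff g = if (p : ℤ) ∣ g then (f.coeff (g / p)) ^ p else 0 := by
  classical
  haveI : Fact p.Prime := ⟨hp⟩
  haveI : CharP (LaurentSeries k) p := charP_of_injective_algebraMap (algebraMap k (LaurentSeries k)).injective p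
  haveI : ExpChar (LaurentSeries k) p := ExpChar.prime hp
  obtain ⟨s, h, hs, hh, hf⟩ := laurent_trunc f
  have hppos : (0 : ℤ) < (p : ℤ) := by exact_mod_cast hp.pos
  have key : (f ^ p).coeff g
      = ∑ m ∈ s, (if g = (p : ℤ) * m then (f.coeff m) ^ p else 0) := by
    calc (f ^ p).coeff g
        = ((∑ m ∈ s, HahnSeries.single m (f.coeff m)) ^ p + h ^ p).coeff g := by
          rw [← add_pow_char]; rw [← hf]
      _ = ((∑ m ∈ s, HahnSeries.single m (f.coeff m)) ^ p).coeff g := by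
          rw [HahnSeries.coeff_add, pow_coeff_eq_zero_of_pos_support hh p hp.ne_zero g hg,
            add_zero]
      _ = (∑ m ∈ s, (HahnSeries.single ((p : ℤ) * m) ((f.coeff m) ^ p) : LaurentSeries k)).coeff
            g := by rw [sum_pow_char]; simp_rw [laurent_single_pow]
      _ = ∑ m ∈ s, (HahnSeries.single ((p : ℤ) * m) ((f.coeff m) ^ p) : LaurentSeries k).coeff
            g := map_sum (coeffHom g) _ s
      _ = _ := Finset.sum_congr rfl fun m _ => by
            rw [HahnSeries.coeff_single]; convert rfl using 2
  rw [key]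
  by_cases hdvd : (p : ℤ) ∣ g
  · obtain ⟨q, rfl⟩ := hdvd
    rw [if_pos ⟨q, rfl⟩, Int.mul_ediv_cancel_left q (by positivity)]
    have hcond : ∀ m ∈ s, (if (p : ℤ) * q = (p : ℤ) * m then (f.coeff m) ^ p else 0)
        = (if q = m then (f.coeff m) ^ p else 0) := by
      intro m _
      congr 1
      simp only [eq_iff_iff]
      exact mul_right_inj' (by positivity)
    rw [Finset.sum_congr rfl hcond, Finset.sum_ite_eq s q]
    by_cases hqs : q ∈ s
    · rw [if_pos hqs]
    · rw [if_neg hqs]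
      have hq0 : q ≤ 0 := nonpos_of_mul_nonpos_right (by linarith [hg]) hppos
      have hsum0 : (∑ m ∈ s, HahnSeries.single m (f.coeff m) : LaurentSeries k).coeff q = 0 := by
        rw [show (∑ m ∈ s, HahnSeries.single m (f.coeff m) : LaurentSeries k).coeff q
            = coeffHom q (∑ m ∈ s, HahnSeries.single m (f.coeff m)) from rfl, map_sum]
        exact Finset.sum_eq_zero fun m hm =>
          HahnSeries.coeff_single_of_ne (fun hqm => hqs (hqm ▸ hm))
      have : f.coeff q = 0 := by
        rw [hf, HahnSeries.coeff_add, hh q hq0, add_zero, hsum0]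
      rw [this, zero_pow hp.ne_zero]
  · rw [if_neg hdvd]
    apply Finset.sum_eq_zero
    intro m _
    rw [if_neg (fun hgm => hdvd ⟨m, hgm⟩)]

theorem powerSeries_isAdicComplete :
    IsAdicComplete (Ideal.span {(PowerSeries.X : PowerSeries k)}) (PowerSeries k) := by
  refine { haus' := ?_, prec' := ?_ }
  · intro x hx
    ext n
    have := hx (n + 1)
    rw [SModEq.zero, ← Ideal.one_eq_top, smul_eq_mul, mul_one, Ideal.span_singleton_pow,
      Ideal.mem_span_singleton, PowerSeries.X_pow_dvd_iff] at this
    simpa using this n (Nat.lt_succ_self n)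
  · intro f hf
    refine ⟨PowerSeries.mk fun n => PowerSeries.coeff n (f (n + 1)), fun n => ?_⟩
    rw [SModEq.sub_mem, ← Ideal.one_eq_top, smul_eq_mul, mul_one, Ideal.span_singleton_pow,
      Ideal.mem_span_singleton, PowerSeries.X_pow_dvd_iff]
    intro m hm
    have h1 := hf (Nat.succ_le_of_lt hm)
    rw [SModEq.sub_mem, ← Ideal.one_eq_top, smul_eq_mul, mul_one, Ideal.span_singleton_pow,
      Ideal.mem_span_singleton, PowerSeries.X_pow_dvd_iff] at h1
    have h2 := h1 m (Nat.lt_succ_self m)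
    rw [map_sub, sub_eq_zero] at h2
    rw [map_sub, sub_eq_zero, PowerSeries.coeff_mk]
    exact h2.symm

theorem coe_powerSeries_coeff_neg (G : PowerSeries k) {m : ℤ} (hm : m < 0) :
    (HahnSeries.ofPowerSeries ℤ k G).coeff m = 0 := by
  rw [HahnSeries.ofPowerSeries_apply, HahnSeries.embDomain_notin_range]
  rintro ⟨n, hn⟩
  have hn : (n : ℤ) = m := hn
  omega

theorem exists_wp (hp : p.Prime) [CharP k p] (f : LaurentSeries k)
    (hf : ∀ g : ℤ, g ≤ 0 → f.coeff g = 0) :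
    ∃ y : LaurentSeries k, f = y - y ^ p := by
  classical
  haveI : Fact p.Prime := ⟨hp⟩
  haveI := powerSeries_isAdicComplete (k := k)
  set G : PowerSeries k := PowerSeries.mk fun n => f.coeff n with hG
  have hGf : HahnSeries.ofPowerSeries ℤ k G = f := by
    ext m
    rcases lt_or_ge m 0 with hm | hm
    · rw [coe_powerSeries_coeff_neg G hm, hf m hm.le]
    · obtain ⟨n, rfl⟩ := Int.eq_ofNat_of_zero_le hm
      rw [HahnSeries.ofPowerSeries_apply_coeff, hG, PowerSeries.coeff_mk]
  set P : Polynomial (PowerSeries k) := Polynomial.X ^ p - Polynomial.X + Polynomial.C G with hP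
  have hmonic : P.Monic := by
    have : P = Polynomial.X ^ p + (Polynomial.C G - Polynomial.X) := by ring
    rw [this]
    apply Polynomial.monic_X_pow_add
    apply lt_of_le_of_lt (Polynomial.degree_sub_le _ _)
    rw [Polynomial.degree_X]
    have h2 : 2 ≤ p := hp.two_le
    apply max_lt
    · exact lt_of_le_of_lt Polynomial.degree_C_le (by exact_mod_cast hp.pos)
    · exact_mod_cast h2
  have heval : P.eval 0 ∈ Ideal.span {(PowerSeries.X : PowerSeries k)} := by
    rw [Ideal.mem_span_singleton, hP]
    simp only [Polynomial.eval_add, Polynomial.eval_sub, Polynomial.eval_pow, Polynomial.eval_X,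
      Polynomial.eval_C, zero_pow hp.ne_zero, sub_zero, zero_add, zero_sub, neg_zero]
    rw [PowerSeries.X_dvd_iff, hG]
    simpa using hf 0 le_rfl
  have hderiv : IsUnit (Ideal.Quotient.mk (Ideal.span {(PowerSeries.X : PowerSeries k)})
      (P.derivative.eval 0)) := by
    have : P.derivative.eval 0 = -1 := by
      rw [hP]
      simp only [Polynomial.derivative_add, Polynomial.derivative_sub, Polynomial.derivative_X_pow,
        Polynomial.derivative_X, Polynomial.derivative_C, add_zero, Polynomial.eval_sub,
        Polynomial.eval_mul, Polynomial.eval_natCast, Polynomial.eval_pow, Polynomial.eval_X,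
        Polynomial.eval_one, Polynomial.eval_mul]
      have h2 := hp.two_le
      rw [zero_pow (by omega : p - 1 ≠ 0)]
      ring
    rw [this]
    exact (isUnit_one.neg).map _
  obtain ⟨a, ha, -⟩ := HenselianRing.is_henselian P hmonic 0 heval hderiv
  refine ⟨HahnSeries.ofPowerSeries ℤ k a, ?_⟩
  have : G = a - a ^ p := by
    have := ha
    rw [Polynomial.IsRoot, hP] at this
    simp only [Polynomial.eval_add, Polynomial.eval_sub, Polynomial.eval_pow, Polynomial.eval_X,
      Polynomial.eval_C] at this
    linear_combination this
  rw [← hGf, this, map_sub, map_pow]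


theorem prod_snoc (b : Fin r → k) (ϑ : Fin (r + 1) → ℕ) :
    (∏ i : Fin (r + 1),
      (Fin.snoc (fun i => algebraMap k (LaurentSeries k) (b i)) (HahnSeries.single 1 1) :
        Fin (r + 1) → LaurentSeries k) i ^ ϑ i)
    = HahnSeries.single ((ϑ (Fin.last r) : ℤ)) (∏ i : Fin r, b i ^ ϑ i.castSucc) := by
  rw [Fin.prod_univ_castSucc]
  simp only [Fin.snoc_castSucc, Fin.snoc_last]
  rw [laurent_single_pow, one_pow, mul_one]
  simp_rw [algebraMap_eq_C]
  rw [show (∏ i : Fin r, HahnSeries.C (b i) ^ ϑ i.castSucc : LaurentSeries k)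
      = HahnSeries.C (∏ i : Fin r, b i ^ ϑ i.castSucc) by
    rw [map_prod]; simp_rw [map_pow]]
  rw [HahnSeries.C_apply, HahnSeries.single_mul_single, zero_add, mul_one]


theorem single_neg_mem (hp : p.Prime) [CharP k p] (b : Fin r → k) (hb : IsPBasis p b) :
    ∀ N : ℕ, ∀ n : ℤ, n < 0 → (-n).toNat ≤ N → ∀ a : k,
      (HahnSeries.single n a : LaurentSeries k) ∈
        wpRange (LaurentSeries k) p ⊔ gtZero (LaurentSeries k) p
          (Fin.snoc (fun i => algebraMap k (LaurentSeries k) (b i)) (HahnSeries.single 1 1)) := by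
  classical
  haveI : Fact p.Prime := ⟨hp⟩
  set b' : Fin (r + 1) → LaurentSeries k :=
    Fin.snoc (fun i => algebraMap k (LaurentSeries k) (b i)) (HahnSeries.single 1 1) with hb'
  set M := wpRange (LaurentSeries k) p ⊔ gtZero (LaurentSeries k) p b' with hM
  have hwp : ∀ y : LaurentSeries k, y - y ^ p ∈ M := fun y =>
    AddSubgroup.mem_sup_left (AddSubgroup.subset_closure ⟨y, rfl⟩)
  have hgt : ∀ (x : LaurentSeries k) (ϑ : Fin (r + 1) → ℕ), (∀ i, ϑ i < p) → ϑ ≠ 0 →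
      x ^ p * ∏ i, b' i ^ ϑ i ∈ M := fun x ϑ h1 h2 =>
    AddSubgroup.mem_sup_right (AddSubgroup.subset_closure ⟨x, ϑ, h1, h2, rfl⟩)
  intro N
  induction N with
  | zero => intro n hn hle a; omega
  | succ N ih =>
    intro n hn hle a
    have ha : a ∈ Submodule.span (pthPowers k p)
        (Set.range fun ϑ : {ϑ : Fin r →₀ ℕ // ∀ i, ϑ i < p} =>
          ϑ.1.prod fun i e => b i ^ e) := hb.2 trivial
    rw [Finsupp.mem_span_range_iff_exists_finsupp] at ha
    obtain ⟨c, hc⟩ := ha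
    rw [← hc]
    rw [show (HahnSeries.single n (c.sum fun u r => r • (u.1.prod fun i e => b i ^ e)) :
          LaurentSeries k)
        = ∑ u ∈ c.support,
            HahnSeries.single n ((c u : k) * (u.1.prod fun i e => b i ^ e)) from
      map_sum (HahnSeries.single.addMonoidHom n) _ _]
    apply AddSubgroup.sum_mem
    intro u hu
    obtain ⟨d, hd⟩ := mem_pthPowers_iff hp (c u).2
    set j : ℕ := (n % p).toNat with hj
    set q : ℤ := n / p with hq
    have hp0 : (0 : ℤ) < (p : ℤ) := by exact_mod_cast hp.pos
    have hmod1 : (0 : ℤ) ≤ n % p := Int.emod_nonneg n (by positivity)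
    have hmod2 : (n % p : ℤ) < p := Int.emod_lt_of_pos n hp0
    have hneq : n = p * q + (j : ℤ) := by
      rw [hj, Int.toNat_of_nonneg hmod1, hq]; exact (Int.mul_ediv_add_emod n p).symm
    have hjp : j < p := by omega
    have hmon : (u.1.prod fun i e => b i ^ e) = ∏ i : Fin r, b i ^ u.1 i :=
      Finsupp.prod_fintype _ _ fun i => pow_zero (b i)
    have key : (HahnSeries.single n ((c u : k) * (u.1.prod fun i e => b i ^ e)) :
          LaurentSeries k)
        = (HahnSeries.single q d) ^ p *
            ∏ i, b' i ^ (Fin.snoc (⇑u.1) j : Fin (r + 1) → ℕ) i := by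
      rw [hb', prod_snoc b, laurent_single_pow, HahnSeries.single_mul_single]
      simp only [Fin.snoc_last]
      rw [← hneq, hmon, ← hd]
      simp [Fin.snoc_castSucc]
    rw [key]
    by_cases hj0 : j = 0
    · by_cases hu0 : (⇑u.1 : Fin r → ℕ) = 0
      · have hprod1 : (∏ i, b' i ^ (Fin.snoc (⇑u.1) j : Fin (r + 1) → ℕ) i) = 1 := by
          apply Finset.prod_eq_one
          intro i _
          have hz : (Fin.snoc (⇑u.1) j : Fin (r + 1) → ℕ) i = 0 := by
            refine Fin.lastCases ?_ ?_ i
            · rw [Fin.snoc_last]; exact hj0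
            · intro i'; rw [Fin.snoc_castSucc]; exact congrFun hu0 i'
          rw [hz, pow_zero]
        rw [hprod1, mul_one]
        have hj0' : (j : ℤ) = 0 := by exact_mod_cast hj0
        have hnpq : n = p * q := by omega
        have hqneg : q < 0 := by nlinarith
        have hqle : (-q).toNat ≤ N := by
          have h2 : (2 : ℤ) ≤ (p : ℤ) := by exact_mod_cast hp.two_le
          have hlt : -q < -n := by nlinarith
          omega
        have step : (HahnSeries.single q d : LaurentSeries k) ^ p
            = HahnSeries.single q d -
              (HahnSeries.single q d - (HahnSeries.single q d) ^ p) := by ring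
        rw [step]
        exact AddSubgroup.sub_mem M (ih q hqneg hqle d) (hwp _)
      · apply hgt
        · intro i
          refine Fin.lastCases ?_ ?_ i
          · rw [Fin.snoc_last]; exact hjp
          · intro i'; rw [Fin.snoc_castSucc]; exact u.2 i'
        · intro h0
          apply hu0
          funext i
          have := congrFun h0 i.castSucc
          rwa [Fin.snoc_castSucc] at this
    · apply hgt
      · intro i
        refine Fin.lastCases ?_ ?_ i
        · rw [Fin.snoc_last]; exact hjp
        · intro i'; rw [Fin.snoc_castSucc]; exact u.2 i'
      · intro h0
        apply hj0
        have := congrFun h0 (Fin.last r)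
        rwa [Fin.snoc_last] at this

end StatementSeven

open StatementSeven in
/-- Let `k` be a field of characteristic `p > 0` of finite `p`-rank `r`, with
`p`-basis `b₁, …, b_r`.  Then the canonical map
`k/(℘(k) + k_{>0}) → k((t))/(℘(k((t))) + k((t))_{>0})` induced by the inclusion `k ↪ k((t))`
is bijective, where `k((t))_{>0}` is taken with respect to the `p`-basis `b₁, …, b_r, t`. -/
theorem laurentSeries_wp_quotient_bijective {k : Type*} [Field k] (p r : ℕ) (hp : p.Prime)
    [CharP k p] (b : Fin r → k) (hb : IsPBasis p b) :
    (∀ x : LaurentSeries k, ∃ a : k,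
        x - algebraMap k (LaurentSeries k) a ∈
          wpRange (LaurentSeries k) p ⊔
            gtZero (LaurentSeries k) p
              (Fin.snoc (fun i => algebraMap k (LaurentSeries k) (b i))
                (HahnSeries.single 1 1))) ∧
    (∀ a : k,
        algebraMap k (LaurentSeries k) a ∈
          wpRange (LaurentSeries k) p ⊔
            gtZero (LaurentSeries k) p
              (Fin.snoc (fun i => algebraMap k (LaurentSeries k) (b i))
                (HahnSeries.single 1 1)) →
        a ∈ wpRange k p ⊔ gtZero k p b) := by
  classical
  haveI : Fact p.Prime := ⟨hp⟩
  constructor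
  · intro x
    refine ⟨x.coeff 0, ?_⟩
    obtain ⟨s, h, hs, hh, hdec⟩ :=
      laurent_trunc (x - algebraMap k (LaurentSeries k) (x.coeff 0))
    rw [hdec]
    refine AddSubgroup.add_mem _ (AddSubgroup.sum_mem _ ?_) ?_
    · intro m hm
      rcases (hs m hm).lt_or_eq with hm0 | hm0
      · exact single_neg_mem hp b hb ((-m).toNat) m hm0 le_rfl _
      · have hc0 : (x - algebraMap k (LaurentSeries k) (x.coeff 0)).coeff 0 = 0 := by
          rw [HahnSeries.coeff_sub, algebraMap_eq_C, HahnSeries.C_apply,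
            HahnSeries.coeff_single_same, sub_self]
        rw [hm0, hc0, HahnSeries.single_eq_zero]
        exact AddSubgroup.zero_mem _
    · obtain ⟨y, hy⟩ := exists_wp hp _ hh
      rw [hy]
      exact AddSubgroup.mem_sup_left (AddSubgroup.subset_closure ⟨y, rfl⟩)
  · intro a hmem
    have hsub : wpRange (LaurentSeries k) p ⊔ gtZero (LaurentSeries k) p
        (Fin.snoc (fun i => algebraMap k (LaurentSeries k) (b i)) (HahnSeries.single 1 1))
        ≤ (wpRange k p ⊔ gtZero k p b).comap (coeffHom 0) := by
      apply sup_le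
      · apply (AddSubgroup.closure_le _).mpr
        rintro y ⟨x, rfl⟩
        rw [SetLike.mem_coe, AddSubgroup.mem_comap]
        have hval : coeffHom 0 (x - x ^ p) = x.coeff 0 - (x.coeff 0) ^ p := by
          show (x - x ^ p).coeff 0 = _
          rw [HahnSeries.coeff_sub, coeff_pow_p hp x 0 le_rfl, if_pos (dvd_zero _),
            Int.zero_ediv]
        rw [hval]
        exact AddSubgroup.mem_sup_left (AddSubgroup.subset_closure ⟨x.coeff 0, rfl⟩)
      · apply (AddSubgroup.closure_le _).mpr
        rintro y ⟨x, ϑ, hϑ, hϑ0, rfl⟩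
        rw [SetLike.mem_coe, AddSubgroup.mem_comap]
        set j : ℕ := ϑ (Fin.last r) with hjdef
        have hval : coeffHom 0 (x ^ p * ∏ i,
              (Fin.snoc (fun i => algebraMap k (LaurentSeries k) (b i))
                (HahnSeries.single 1 1) : Fin (r + 1) → LaurentSeries k) i ^ ϑ i)
            = (x ^ p).coeff (-(j : ℤ)) * (∏ i : Fin r, b i ^ ϑ i.castSucc) := by
          show (x ^ p * _).coeff 0 = _
          rw [prod_snoc b ϑ, show (0 : ℤ) = -(j : ℤ) + (j : ℤ) by ring,
            HahnSeries.coeff_mul_single_add]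
        rw [hval]
        by_cases hj0 : j = 0
        · rw [hj0]
          simp only [Nat.cast_zero, neg_zero]
          rw [coeff_pow_p hp x 0 le_rfl, if_pos (dvd_zero _), Int.zero_ediv]
          apply AddSubgroup.mem_sup_right
          apply AddSubgroup.subset_closure
          refine ⟨x.coeff 0, fun i => ϑ i.castSucc, fun i => hϑ _, ?_, rfl⟩
          intro h0
          apply hϑ0
          funext i
          refine Fin.lastCases ?_ ?_ i
          · show ϑ (Fin.last r) = 0
            rw [← hjdef]; exact hj0
          · intro i'
            exact congrFun h0 i'
        · have hnd : ¬ ((p : ℤ) ∣ -(j : ℤ)) := by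
            rw [dvd_neg]
            intro hdvd
            have hdj : p ∣ j := by exact_mod_cast hdvd
            have h1 := Nat.le_of_dvd (Nat.pos_of_ne_zero hj0) hdj
            have h2 : j < p := hjdef ▸ hϑ (Fin.last r)
            omega
          rw [coeff_pow_p hp x _ (by omega : -(j : ℤ) ≤ 0), if_neg hnd, zero_mul]
          exact AddSubgroup.zero_mem _
    have hmem2 := hsub hmem
    rw [AddSubgroup.mem_comap] at hmem2
    have hπa : coeffHom 0 (algebraMap k (LaurentSeries k) a) = a := by
      show (algebraMap k (LaurentSeries k) a).coeff 0 = a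
      rw [algebraMap_eq_C, HahnSeries.C_apply, HahnSeries.coeff_single_same]
    rwa [hπa] at hmem2
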